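/- Let A ⊆ ℝ be an open invex set with respect to η : A × A → ℝ and a, b ∈ A with a < a + η(b,a), with f′ integrable on [a, a+η(b,a)]. Suppose f : A → ℝ is differentiable and |f′|^q is preinvex on A for some fixed q > 1 with 1/p + 1/q = 1. Then for α ∈ (0,1]: |(f(a)+f(a+η(b,a)))/2 − (Γ(α+1)/(2 η(b,a)^α))[J_{a+}^α f(a+η(b,a)) + J_{(a+η(b,a))−}^α f(a)]| ≤ (η(b,a)/(2(αp+1)^{1/p})) ((|f′(a)|^q + |f′(b)|^q)/2)^{1/q}. -/

import Mathlib

open MeasureTheory intervalIntegral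

/-- Riemann-Liouville left fractional integral `J_{a+}^α f(x)`. -/
noncomputable def JL (α a x : ℝ) (f : ℝ → ℝ) : ℝ :=
  (1 / Real.Gamma α) * ∫ t in a..x, (x - t) ^ (α - 1) * f t

/-- Riemann-Liouville right fractional integral `J_{b-}^α f(x)`. -/
noncomputable def JR (α x b : ℝ) (f : ℝ → ℝ) : ℝ :=
  (1 / Real.Gamma α) * ∫ t in x..b, (t - x) ^ (α - 1) * f t

/-- `A` is invex with respect to `η`. -/
def InvexSet (A : Set ℝ) (η : ℝ → ℝ → ℝ) : Prop :=
  ∀ x ∈ A, ∀ y ∈ A, ∀ t ∈ Set.Icc (0:ℝ) 1, x + t * η y x ∈ A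

/-- `f` is preinvex with respect to `η` on `A`. -/
def PreinvexOn (A : Set ℝ) (η : ℝ → ℝ → ℝ) (f : ℝ → ℝ) : Prop :=
  ∀ x ∈ A, ∀ y ∈ A, ∀ t ∈ Set.Icc (0:ℝ) 1,
    f (x + t * η y x) ≤ (1 - t) * f x + t * f y

/-- Condition C of Mohan and Neogy. -/
def CondC (A : Set ℝ) (η : ℝ → ℝ → ℝ) : Prop :=
  ∀ x ∈ A, ∀ y ∈ A, ∀ t ∈ Set.Icc (0:ℝ) 1,
    η y (y + t * η x y) = -t * η x y ∧ η x (y + t * η x y) = (1 - t) * η x y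


lemma aux_subadd {α u v : ℝ} (hα0 : 0 < α) (hα1 : α ≤ 1) (hu : 0 ≤ u) (hv : 0 ≤ v) :
    (u + v) ^ α ≤ u ^ α + v ^ α := by
  lift u to NNReal using hu
  lift v to NNReal using hv
  have h := NNReal.rpow_add_rpow_le u v hα0 hα1
  simp only [one_div_one, NNReal.rpow_one] at h
  have h2 : ((u + v : NNReal) : ℝ) ^ α ≤ (((u ^ α + v ^ α : NNReal) ^ (1/α) : NNReal) : ℝ) ^ α := by
    apply Real.rpow_le_rpow (by positivity) _ hα0.le
    exact_mod_cast h
  calc ((u:ℝ) + (v:ℝ)) ^ α = ((u + v : NNReal) : ℝ) ^ α := by norm_cast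
    _ ≤ (((u ^ α + v ^ α : NNReal) ^ (1/α) : NNReal) : ℝ) ^ α := h2
    _ = (u:ℝ) ^ α + (v:ℝ) ^ α := by
        rw [← NNReal.coe_rpow, ← NNReal.rpow_mul, one_div,
          inv_mul_cancel₀ hα0.ne', NNReal.rpow_one]
        push_cast [NNReal.coe_rpow]
        ring

lemma aux_abs_rpow_sub {α x y : ℝ} (hα0 : 0 < α) (hα1 : α ≤ 1) (hx : 0 ≤ x) (hy : 0 ≤ y) :
    |x ^ α - y ^ α| ≤ |x - y| ^ α := by
  wlog hxy : y ≤ x generalizing x y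
  · rw [abs_sub_comm, abs_sub_comm x y]; exact this hy hx (le_of_not_ge hxy)
  have h1 : x ^ α - y ^ α ≤ (x - y) ^ α := by
    have := aux_subadd hα0 hα1 hy (sub_nonneg.2 hxy)
    rw [add_sub_cancel] at this
    linarith
  rw [abs_of_nonneg (sub_nonneg.2 (Real.rpow_le_rpow hy hxy hα0.le)),
    abs_of_nonneg (sub_nonneg.2 hxy)]
  exact h1

lemma cont_rpow {α : ℝ} (hα : 0 ≤ α) (g : ℝ → ℝ) (hg : Continuous g) :
    Continuous (fun u => g u ^ α) :=
  continuous_iff_continuousAt.2 fun x => (hg.continuousAt).rpow_const (Or.inr hα)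

lemma ibp_left {α a c : ℝ} (hac : a < c) (hα : 0 < α) {f : ℝ → ℝ}
    (hf : ∀ x ∈ Set.Icc a c, DifferentiableAt ℝ f x)
    (hint : IntervalIntegrable (deriv f) volume a c) :
    ∫ u in a..c, (c - u) ^ (α - 1) * f u
      = (c - a) ^ α / α * f a + (1/α) * ∫ u in a..c, (c - u) ^ α * deriv f u := by
  have hfc : ContinuousOn f (Set.Icc a c) := fun x hx => (hf x hx).continuousAt.continuousWithinAt
  have hrc : Continuous (fun u : ℝ => (c - u) ^ α) :=
    cont_rpow hα.le _ (continuous_const.sub continuous_id)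
  set g : ℝ → ℝ := fun u => -((c - u) ^ α / α * f u) with hg
  set g' : ℝ → ℝ := fun u => (c - u) ^ (α - 1) * f u - (c - u) ^ α / α * deriv f u with hg'
  have t1int : IntervalIntegrable (fun u => (c - u) ^ (α - 1) * f u) volume a c := by
    have hb : IntervalIntegrable (fun x : ℝ => x ^ (α - 1)) volume 0 (c - a) :=
      intervalIntegrable_rpow' (by linarith)
    have := hb.comp_sub_left c
    simp only [sub_zero, sub_sub_cancel] at this
    exact this.symm.mul_continuousOn (by rwa [Set.uIcc_of_le hac.le])
  have t2int : IntervalIntegrable (fun u => (c - u) ^ α / α * deriv f u) volume a c := by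
    refine hint.continuousOn_mul ?_
    exact (hrc.div_const α).continuousOn
  have hderiv : ∀ x ∈ Set.Ioo a c, HasDerivWithinAt g (g' x) (Set.Ioi x) x := by
    intro x hx
    have h1 : HasDerivAt (fun u : ℝ => c - u) (-1) x := (hasDerivAt_id x).const_sub c
    have h2 : HasDerivAt (fun x : ℝ => x ^ α) (α * (c - x) ^ (α - 1)) (c - x) :=
      Real.hasDerivAt_rpow_const (Or.inl (by linarith [hx.2]))
    have h3 : HasDerivAt (fun u : ℝ => (c - u) ^ α) (α * (c - x) ^ (α - 1) * (-1)) x :=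
      h2.comp x h1
    have h4 : HasDerivAt f (deriv f x) x := (hf x (Set.Ioo_subset_Icc_self hx)).hasDerivAt
    have h5 := (((h3.div_const α).mul h4).neg)
    have : -(α * (c - x) ^ (α - 1) * (-1) / α * f x + (c - x) ^ α / α * deriv f x) = g' x := by
      simp only [hg']
      field_simp
      ring
    rw [this] at h5
    exact h5.hasDerivWithinAt
  have hcont : ContinuousOn g (Set.Icc a c) :=
    ((hrc.continuousOn.div_const α).mul hfc).neg
  have hgint : IntervalIntegrable g' volume a c := t1int.sub t2int
  have key := integral_eq_sub_of_hasDeriv_right_of_le hac.le hcont hderiv hgint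
  have hsplit : ∫ u in a..c, g' u
      = (∫ u in a..c, (c - u) ^ (α - 1) * f u) - ∫ u in a..c, (c - u) ^ α / α * deriv f u :=
    integral_sub t1int t2int
  have hgc : g c = 0 := by simp [hg, Real.zero_rpow hα.ne']
  have hga : g a = -((c - a) ^ α / α * f a) := rfl
  have hdiv : ∫ u in a..c, (c - u) ^ α / α * deriv f u
      = (1/α) * ∫ u in a..c, (c - u) ^ α * deriv f u := by
    rw [← intervalIntegral.integral_const_mul]
    congr 1; ext u; field_simp
  rw [hsplit, hgc, hga, hdiv] at key
  linarith

lemma ibp_right {α a c : ℝ} (hac : a < c) (hα : 0 < α) {f : ℝ → ℝ}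
    (hf : ∀ x ∈ Set.Icc a c, DifferentiableAt ℝ f x)
    (hint : IntervalIntegrable (deriv f) volume a c) :
    ∫ u in a..c, (u - a) ^ (α - 1) * f u
      = (c - a) ^ α / α * f c - (1/α) * ∫ u in a..c, (u - a) ^ α * deriv f u := by
  have hfc : ContinuousOn f (Set.Icc a c) := fun x hx => (hf x hx).continuousAt.continuousWithinAt
  have hrc : Continuous (fun u : ℝ => (u - a) ^ α) :=
    cont_rpow hα.le _ (continuous_id.sub continuous_const)
  set g : ℝ → ℝ := fun u => (u - a) ^ α / α * f u with hg
  set g' : ℝ → ℝ := fun u => (u - a) ^ (α - 1) * f u + (u - a) ^ α / α * deriv f u with hg'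
  have t1int : IntervalIntegrable (fun u => (u - a) ^ (α - 1) * f u) volume a c := by
    have hb : IntervalIntegrable (fun x : ℝ => x ^ (α - 1)) volume 0 (c - a) :=
      intervalIntegrable_rpow' (by linarith)
    have := hb.comp_sub_right a
    simp only [zero_add, sub_add_cancel] at this
    exact this.mul_continuousOn (by rwa [Set.uIcc_of_le hac.le])
  have t2int : IntervalIntegrable (fun u => (u - a) ^ α / α * deriv f u) volume a c :=
    hint.continuousOn_mul (hrc.div_const α).continuousOn
  have hderiv : ∀ x ∈ Set.Ioo a c, HasDerivWithinAt g (g' x) (Set.Ioi x) x := by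
    intro x hx
    have h1 : HasDerivAt (fun u : ℝ => u - a) 1 x := (hasDerivAt_id x).sub_const a
    have h2 : HasDerivAt (fun x : ℝ => x ^ α) (α * (x - a) ^ (α - 1)) (x - a) :=
      Real.hasDerivAt_rpow_const (Or.inl (by linarith [hx.1]))
    have h3 : HasDerivAt (fun u : ℝ => (u - a) ^ α) (α * (x - a) ^ (α - 1) * 1) x := by
      have h := h2.comp x h1; exact h
    have h4 : HasDerivAt f (deriv f x) x := (hf x (Set.Ioo_subset_Icc_self hx)).hasDerivAt
    have h5 := ((h3.div_const α).mul h4)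
    have : α * (x - a) ^ (α - 1) * 1 / α * f x + (x - a) ^ α / α * deriv f x = g' x := by
      simp only [hg']
      field_simp
    rw [this] at h5
    exact h5.hasDerivWithinAt
  have hcont : ContinuousOn g (Set.Icc a c) :=
    (hrc.continuousOn.div_const α).mul hfc
  have hgint : IntervalIntegrable g' volume a c := t1int.add t2int
  have key := integral_eq_sub_of_hasDeriv_right_of_le hac.le hcont hderiv hgint
  have hsplit : ∫ u in a..c, g' u
      = (∫ u in a..c, (u - a) ^ (α - 1) * f u) + ∫ u in a..c, (u - a) ^ α / α * deriv f u :=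
    integral_add t1int t2int
  have hga : g a = 0 := by simp [hg, Real.zero_rpow hα.ne']
  have hgc : g c = (c - a) ^ α / α * f c := rfl
  have hdiv : ∫ u in a..c, (u - a) ^ α / α * deriv f u
      = (1/α) * ∫ u in a..c, (u - a) ^ α * deriv f u := by
    rw [← intervalIntegral.integral_const_mul]
    congr 1; ext u; field_simp
  rw [hsplit, hgc, hga, hdiv] at key
  linarith

lemma abs_linear_integral {r a c : ℝ} (hac : a < c) (hr : 0 < r) :
    ∫ u in a..c, |c + a - 2*u| ^ r = (c - a) ^ (r+1) / (r+1) := by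
  have hcont : Continuous (fun u : ℝ => |c + a - 2*u| ^ r) :=
    cont_rpow hr.le _ (by continuity)
  set m := (a + c) / 2 with hm
  have ham : a ≤ m := by rw [hm]; linarith
  have hmc : m ≤ c := by rw [hm]; linarith
  have hsplit : (∫ u in a..m, |c + a - 2*u| ^ r) + ∫ u in m..c, |c + a - 2*u| ^ r
      = ∫ u in a..c, |c + a - 2*u| ^ r :=
    integral_add_adjacent_intervals (hcont.intervalIntegrable _ _) (hcont.intervalIntegrable _ _)
  have h1 : ∫ u in a..m, |c + a - 2*u| ^ r = (1/2) * ((c - a) ^ (r+1) / (r+1)) := by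
    have e1 : ∫ u in a..m, |c + a - 2*u| ^ r = ∫ u in a..m, ((-2) * u + (c + a)) ^ r := by
      apply integral_congr
      intro u hu
      rw [Set.uIcc_of_le ham] at hu
      have hnn : 0 ≤ c + a - 2*u := by
        rw [hm] at hu; obtain ⟨_, h2⟩ := hu; linarith
      show |c + a - 2*u| ^ r = ((-2) * u + (c + a)) ^ r
      rw [abs_of_nonneg hnn]; ring_nf
    rw [e1, integral_comp_mul_add (fun x : ℝ => x ^ r) (by norm_num : (-2:ℝ) ≠ 0) (c + a)]
    have e2 : (-2) * a + (c + a) = c - a := by ring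
    have e3 : (-2) * m + (c + a) = 0 := by rw [hm]; ring
    rw [e2, e3, integral_symm, integral_rpow (Or.inl (by linarith))]
    rw [Real.zero_rpow (by linarith : r + 1 ≠ 0)]
    simp only [smul_eq_mul]
    ring
  have h2 : ∫ u in m..c, |c + a - 2*u| ^ r = (1/2) * ((c - a) ^ (r+1) / (r+1)) := by
    have e1 : ∫ u in m..c, |c + a - 2*u| ^ r = ∫ u in m..c, (2 * u + (-(c + a))) ^ r := by
      apply integral_congr
      intro u hu
      rw [Set.uIcc_of_le hmc] at hu
      have hnp : c + a - 2*u ≤ 0 := by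
        rw [hm] at hu; obtain ⟨h2, _⟩ := hu; linarith
      show |c + a - 2*u| ^ r = (2 * u + (-(c + a))) ^ r
      rw [abs_of_nonpos hnp]; ring_nf
    rw [e1, integral_comp_mul_add (fun x : ℝ => x ^ r) (by norm_num : (2:ℝ) ≠ 0) (-(c + a))]
    have e2 : 2 * m + (-(c + a)) = 0 := by rw [hm]; ring
    have e3 : 2 * c + (-(c + a)) = c - a := by ring
    rw [e2, e3, integral_rpow (Or.inl (by linarith))]
    rw [Real.zero_rpow (by linarith : r + 1 ≠ 0)]
    simp only [smul_eq_mul]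
    ring
  rw [← hsplit, h1, h2]; ring

lemma linear_integral {a c Ka Kb : ℝ} (hac : a < c) :
    ∫ u in a..c, ((c - u)/(c - a) * Ka + (u - a)/(c - a) * Kb)
      = (c - a) * ((Ka + Kb)/2) := by
  have hne : c - a ≠ 0 := by linarith
  have e1 : ∀ u : ℝ, (c - u)/(c - a) * Ka + (u - a)/(c - a) * Kb
      = ((Kb - Ka)/(c - a)) * u + ((c * Ka - a * Kb)/(c - a)) := by
    intro u; field_simp; ring
  rw [integral_congr (fun u _ => e1 u)]
  rw [integral_add ((show IntervalIntegrable (fun x : ℝ => (Kb - Ka)/(c - a) * x) volume a c from (continuous_const.mul continuous_id').intervalIntegrable _ _))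
    (intervalIntegrable_const), intervalIntegral.integral_const_mul, integral_id, intervalIntegral.integral_const]
  simp only [smul_eq_mul]
  field_simp
  ring

set_option maxHeartbeats 1000000 in
theorem fractional_estimate_holder_preinvex
    (A : Set ℝ) (η : ℝ → ℝ → ℝ) (a b : ℝ) (f : ℝ → ℝ) (α p q : ℝ)
    (hA : IsOpen A) (hinv : InvexSet A η) (ha : a ∈ A) (hb : b ∈ A)
    (hab : a < a + η b a)
    (hdiff : ∀ x ∈ A, DifferentiableAt ℝ f x)
    (hint : IntervalIntegrable (deriv f) volume a (a + η b a))
    (hq : 1 < q) (hpq : 1 / p + 1 / q = 1)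
    (hpre : PreinvexOn A η (fun x => |deriv f x| ^ q))
    (hα : α ∈ Set.Ioc (0:ℝ) 1) :
    |(f a + f (a + η b a)) / 2 -
        Real.Gamma (α + 1) / (2 * (η b a) ^ α) *
          (JL α a (a + η b a) f + JR α a (a + η b a) f)| ≤
      η b a / (2 * (α * p + 1) ^ (1 / p)) *
        ((|deriv f a| ^ q + |deriv f b| ^ q) / 2) ^ (1 / q) := by
  obtain ⟨hα0, hα1⟩ := hα
  have hq0 : 0 < q := lt_trans one_pos hq
  have hiq : 0 < 1/q := by positivity
  have hiq1 : 1/q < 1 := by rw [div_lt_one hq0]; exact hq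
  have hip : 1/p = 1 - 1/q := by linarith
  have hp0 : 0 < p := by
    have h1 : 0 < 1/p := by rw [hip]; linarith
    exact one_div_pos.mp h1
  have hp1 : 1 < p := by
    have h2 : 1/p < 1 := by rw [hip]; linarith
    rw [div_lt_one hp0] at h2; exact h2
  set e := η b a with he
  have hh : 0 < e := by linarith
  set c := a + e with hc
  have hac : a < c := hab
  have hca : c - a = e := by rw [hc]; ring
  -- the interval is inside A
  have hsub : Set.Icc a c ⊆ A := by
    intro u hu
    have ht : (u - a)/e ∈ Set.Icc (0:ℝ) 1 := by
      constructor
      · apply div_nonneg (by linarith [hu.1]) hh.le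
      · rw [div_le_one hh]; have := hu.2; rw [hc] at this; linarith
    have h2 := hinv a ha b hb _ ht
    have h3 : a + (u - a)/e * η b a = u := by rw [← he]; field_simp; ring
    rwa [h3] at h2
  have hfI : ∀ x ∈ Set.Icc a c, DifferentiableAt ℝ f x := fun x hx => hdiff x (hsub hx)
  have hint' : IntervalIntegrable (deriv f) volume a c := hint
  set Ka := |deriv f a| ^ q with hKadef
  set Kb := |deriv f b| ^ q with hKbdef
  have hKa : 0 ≤ Ka := Real.rpow_nonneg (abs_nonneg _) q
  have hKb : 0 ≤ Kb := Real.rpow_nonneg (abs_nonneg _) q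
  -- preinvexity bound on the derivative
  have hbound : ∀ u ∈ Set.Icc a c, |deriv f u| ^ q ≤ (c - u)/e * Ka + (u - a)/e * Kb := by
    intro u hu
    have ht : (u - a)/e ∈ Set.Icc (0:ℝ) 1 := by
      constructor
      · apply div_nonneg (by linarith [hu.1]) hh.le
      · rw [div_le_one hh]; have := hu.2; rw [hc] at this; linarith
    have h2 := hpre a ha b hb _ ht
    have h3 : a + (u - a)/e * η b a = u := by rw [← he]; field_simp; ring
    rw [h3] at h2
    have h4 : 1 - (u - a)/e = (c - u)/e := by rw [hc]; field_simp; ring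
    rw [h4] at h2
    exact h2
  set K := max Ka Kb with hKdef
  have hK : 0 ≤ K := le_trans hKa (le_max_left _ _)
  have hbK : ∀ u ∈ Set.Icc a c, |deriv f u| ^ q ≤ K := by
    intro u hu
    refine (hbound u hu).trans ?_
    have h1 : 0 ≤ (c - u)/e := div_nonneg (by linarith [hu.2]) hh.le
    have h2 : 0 ≤ (u - a)/e := div_nonneg (by linarith [hu.1]) hh.le
    have h3 : (c - u)/e + (u - a)/e = 1 := by field_simp; rw [hc]; ring
    nlinarith [le_max_left Ka Kb, le_max_right Ka Kb]
  -- the key identity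
  have hΓpos : 0 < Real.Gamma α := Real.Gamma_pos_of_pos hα0
  have hhα : (0:ℝ) < e ^ α := Real.rpow_pos_of_pos hh α
  have hcrc : Continuous (fun u : ℝ => (c - u) ^ α) :=
    cont_rpow hα0.le _ (continuous_const.sub continuous_id)
  have harc : Continuous (fun u : ℝ => (u - a) ^ α) :=
    cont_rpow hα0.le _ (continuous_id.sub continuous_const)
  have hGi1 : IntervalIntegrable (fun u => (c - u) ^ α * deriv f u) volume a c :=
    hint'.continuousOn_mul hcrc.continuousOn
  have hGi2 : IntervalIntegrable (fun u => (u - a) ^ α * deriv f u) volume a c :=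
    hint'.continuousOn_mul harc.continuousOn
  set G : ℝ → ℝ := fun u => (c - u) ^ α - (u - a) ^ α with hGdef
  have hGcont : Continuous G := hcrc.sub harc
  set I := ∫ u in a..c, G u * deriv f u with hIdef
  have hIsplit : I = (∫ u in a..c, (c - u) ^ α * deriv f u)
      - ∫ u in a..c, (u - a) ^ α * deriv f u := by
    rw [hIdef, ← integral_sub hGi1 hGi2]
    apply integral_congr
    intro u _
    show G u * deriv f u = _
    rw [hGdef]; ring
  have i1 := ibp_left hac hα0 hfI hint'
  have i2 := ibp_right hac hα0 hfI hint'
  rw [hca] at i1 i2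
  have identity : (f a + f c)/2 - Real.Gamma (α+1)/(2*e^α) * (JL α a c f + JR α a c f)
      = -(1/(2*e^α)) * I := by
    rw [JL, JR, Real.Gamma_add_one hα0.ne', i1, i2, hIsplit]
    field_simp
    ring
  rw [identity]
  have habs : |(-(1/(2*e^α)) * I)| = 1/(2*e^α) * |I| := by
    rw [abs_mul, abs_neg, abs_of_pos (by positivity)]
  rw [habs]
  -- Hölder setting
  set μ := volume.restrict (Set.Ioc a c) with hμ
  haveI : IsFiniteMeasure μ := ⟨by rw [hμ, Measure.restrict_apply_univ]; exact measure_Ioc_lt_top⟩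
  have hconj : p.HolderConjugate q := Real.holderConjugate_iff.mpr ⟨hp1, by simpa [one_div] using hpq⟩
  have hmemG : MemLp G (ENNReal.ofReal p) μ := by
    refine MemLp.of_bound hGcont.aestronglyMeasurable (e^α) ?_
    rw [hμ]
    refine (ae_restrict_iff' measurableSet_Ioc).2 (ae_of_all _ fun u hu => ?_)
    have b1 : 0 ≤ (c - u) ^ α := Real.rpow_nonneg (by linarith [hu.2]) α
    have b2 : (c - u) ^ α ≤ e ^ α :=
      Real.rpow_le_rpow (by linarith [hu.2]) (by linarith [hu.1]) hα0.le
    have b3 : 0 ≤ (u - a) ^ α := Real.rpow_nonneg (by linarith [hu.1]) α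
    have b4 : (u - a) ^ α ≤ e ^ α :=
      Real.rpow_le_rpow (by linarith [hu.1]) (by linarith [hu.2]) hα0.le
    rw [Real.norm_eq_abs, hGdef, abs_sub_le_iff]
    constructor <;> linarith
  have hdm : Measurable (deriv f) := measurable_deriv f
  have hmemf : MemLp (deriv f) (ENNReal.ofReal q) μ := by
    refine MemLp.of_bound hdm.aestronglyMeasurable (K ^ (1/q)) ?_
    rw [hμ]
    refine (ae_restrict_iff' measurableSet_Ioc).2 (ae_of_all _ fun u hu => ?_)
    have h1 : |deriv f u| ^ q ≤ K := hbK u ⟨hu.1.le, hu.2⟩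
    have h2 := Real.rpow_le_rpow (Real.rpow_nonneg (abs_nonneg _) q) h1 hiq.le
    rw [Real.norm_eq_abs]
    rwa [← Real.rpow_mul (abs_nonneg _), mul_one_div_cancel hq0.ne', Real.rpow_one] at h2
  have holder := integral_mul_norm_le_Lp_mul_Lq (μ := μ) hconj hmemG hmemf
  have s1 : |I| ≤ ∫ u, ‖G u‖ * ‖deriv f u‖ ∂μ := by
    calc |I| ≤ ∫ u in a..c, |G u * deriv f u| := by
          rw [hIdef]; exact abs_integral_le_integral_abs hac.le
      _ = ∫ u, ‖G u‖ * ‖deriv f u‖ ∂μ := by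
          rw [integral_of_le hac.le, hμ]
          simp only [Real.norm_eq_abs, abs_mul]
  -- first factor
  set r := α * p with hrdef
  have hr0 : 0 < r := mul_pos hα0 hp0
  have hr1 : 0 < r + 1 := by linarith
  have f1 : ∫ u, ‖G u‖ ^ p ∂μ ≤ e ^ (r+1) / (r+1) := by
    have hcont2 : Continuous (fun u : ℝ => |c + a - 2*u| ^ r) :=
      cont_rpow hr0.le _ ((continuous_const.sub (continuous_const.mul continuous_id')).abs)
    have hcont1 : Continuous (fun u : ℝ => ‖G u‖ ^ p) :=
      cont_rpow hp0.le _ hGcont.norm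
    have mono : ∫ u, ‖G u‖ ^ p ∂μ ≤ ∫ u, |c + a - 2*u| ^ r ∂μ := by
      rw [hμ]
      refine setIntegral_mono_on (hcont1.integrableOn_Ioc) (hcont2.integrableOn_Ioc)
        measurableSet_Ioc ?_
      intro u hu
      have key : |G u| ≤ |c + a - 2*u| ^ α := by
        have := aux_abs_rpow_sub hα0 hα1 (by linarith [hu.2] : (0:ℝ) ≤ c - u)
          (by linarith [hu.1] : (0:ℝ) ≤ u - a)
        rw [hGdef]
        convert this using 3 <;> ring
      calc ‖G u‖ ^ p ≤ (|c + a - 2*u| ^ α) ^ p := by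
            rw [Real.norm_eq_abs]
            exact Real.rpow_le_rpow (abs_nonneg _) key hp0.le
        _ = |c + a - 2*u| ^ r := by
            rw [← Real.rpow_mul (abs_nonneg _), hrdef]
    have comp : ∫ u, |c + a - 2*u| ^ r ∂μ = e ^ (r+1) / (r+1) := by
      rw [hμ, ← integral_of_le hac.le, abs_linear_integral hac hr0, hca]
    rw [← comp]; exact mono
  -- second factor
  have f2 : ∫ u, ‖deriv f u‖ ^ q ∂μ ≤ e * ((Ka + Kb)/2) := by
    have hmeas : Measurable (fun u => ‖deriv f u‖ ^ q) :=
      (Real.continuous_rpow_const hq0.le).measurable.comp hdm.norm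
    have hint2 : Integrable (fun u => ‖deriv f u‖ ^ q) μ := by
      refine Integrable.mono' (integrable_const K) hmeas.aestronglyMeasurable ?_
      rw [hμ]
      refine (ae_restrict_iff' measurableSet_Ioc).2 (ae_of_all _ fun u hu => ?_)
      rw [Real.norm_eq_abs, abs_of_nonneg (Real.rpow_nonneg (norm_nonneg _) q),
        Real.norm_eq_abs]
      exact hbK u ⟨hu.1.le, hu.2⟩
    have hcont3 : Continuous (fun u : ℝ => (c - u)/e * Ka + (u - a)/e * Kb) :=
      (((continuous_const.sub continuous_id').div_const e).mul continuous_const).add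
        (((continuous_id'.sub continuous_const).div_const e).mul continuous_const)
    have mono : ∫ u, ‖deriv f u‖ ^ q ∂μ ≤ ∫ u, ((c - u)/e * Ka + (u - a)/e * Kb) ∂μ := by
      rw [hμ]
      refine setIntegral_mono_on (by rw [hμ] at hint2; exact hint2) (hcont3.integrableOn_Ioc)
        measurableSet_Ioc ?_
      intro u hu
      rw [Real.norm_eq_abs]
      exact hbound u ⟨hu.1.le, hu.2⟩
    have comp : ∫ u, ((c - u)/e * Ka + (u - a)/e * Kb) ∂μ = e * ((Ka + Kb)/2) := by
      rw [hμ, ← integral_of_le hac.le]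
      have h5 := linear_integral (Ka := Ka) (Kb := Kb) hac
      rw [hca] at h5
      exact h5
    rw [← comp]; exact mono
  -- assemble
  have hInonneg1 : 0 ≤ ∫ u, ‖G u‖ ^ p ∂μ :=
    integral_nonneg fun u => Real.rpow_nonneg (norm_nonneg _) p
  have hInonneg2 : 0 ≤ ∫ u, ‖deriv f u‖ ^ q ∂μ :=
    integral_nonneg fun u => Real.rpow_nonneg (norm_nonneg _) q
  have F1 : (∫ u, ‖G u‖ ^ p ∂μ) ^ (1/p) ≤ (e ^ (r+1) / (r+1)) ^ (1/p) :=
    Real.rpow_le_rpow hInonneg1 f1 (by positivity)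
  have F2 : (∫ u, ‖deriv f u‖ ^ q ∂μ) ^ (1/q) ≤ (e * ((Ka + Kb)/2)) ^ (1/q) :=
    Real.rpow_le_rpow hInonneg2 f2 hiq.le
  have main : |I| ≤ (e ^ (r+1) / (r+1)) ^ (1/p) * (e * ((Ka + Kb)/2)) ^ (1/q) := by
    refine (s1.trans holder).trans ?_
    exact mul_le_mul F1 F2 (Real.rpow_nonneg hInonneg2 _) (by positivity)
  have hM : 0 ≤ (Ka + Kb)/2 := by linarith
  -- final algebra
  have e3 : e ^ (1/p) * e ^ (1/q) = e := by
    rw [← Real.rpow_add hh, hpq, Real.rpow_one]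
  have e1 : (e ^ (r+1) / (r+1)) ^ (1/p) = e ^ α * e ^ (1/p) / (r+1) ^ (1/p) := by
    have epow : (r+1) * (1/p) = α + 1/p := by rw [hrdef]; field_simp
    rw [Real.div_rpow (by positivity) hr1.le, ← Real.rpow_mul hh.le, epow, Real.rpow_add hh]
  have e2 : (e * ((Ka + Kb)/2)) ^ (1/q) = e ^ (1/q) * ((Ka + Kb)/2) ^ (1/q) :=
    Real.mul_rpow hh.le hM
  have hrpos : (0:ℝ) < (r+1) ^ (1/p) := Real.rpow_pos_of_pos hr1 _
  calc 1/(2*e^α) * |I| ≤ 1/(2*e^α) * ((e ^ (r+1) / (r+1)) ^ (1/p) * (e * ((Ka + Kb)/2)) ^ (1/q)) := by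
        apply mul_le_mul_of_nonneg_left main (by positivity)
    _ = e / (2 * (r+1) ^ (1/p)) * ((Ka + Kb)/2) ^ (1/q) := by
        rw [e1, e2]
        have h9 : (1:ℝ)/(2*e^α) * (e ^ α * e ^ (1/p) / (r+1)^(1/p) * (e ^ (1/q) * ((Ka+Kb)/2) ^ (1/q)))
            = e ^ (1/p) * e ^ (1/q) * ((Ka+Kb)/2) ^ (1/q) * (e^α / e^α) / (2*(r+1)^(1/p)) := by
          ring
        rw [h9, div_self hhα.ne', e3]
        ring
    _ = η b a / (2 * (α * p + 1) ^ (1/p)) * ((|deriv f a| ^ q + |deriv f b| ^ q)/2) ^ (1/q) := by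
        rw [← he, ← hrdef, ← hKadef, ← hKbdef]
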